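/- For n ≥ 2, 1 ≤ s ≤ n, and 0 ≤ r ≤ n-1, the recurrence B^+(n,s,r) = Σ_{j=1}^{s-1} B^+(n-1,j,r-1) + Σ_{j=1}^{n-1} B^+(n-1,-j,r) + Σ_{j=s}^{n-1} B^+(n-1,j,r) holds, with initial conditions B^+(1,1,0) = 1 and B^+(1,-1,r) = 0 for all r. -/

import Mathlib

open Finset Polynomial

/-- A signed permutation in the hyperoctahedral group `B_n`: a bijection of
`{±1,…,±n}` with `σ(-i) = -σ(i)`, encoded by its values on `1,…,n`
(extended by `0` elsewhere). -/
structure SignedPerm (n : ℕ) where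
  toFun : ℕ → ℤ
  mem_abs : ∀ i ∈ Finset.Icc 1 n, (toFun i).natAbs ∈ Finset.Icc 1 n
  inj_abs : ∀ i ∈ Finset.Icc 1 n, ∀ j ∈ Finset.Icc 1 n,
      (toFun i).natAbs = (toFun j).natAbs → i = j
  eq_zero : ∀ i, i ∉ Finset.Icc 1 n → toFun i = 0

/-- The extended word `σ_0 σ_1 ⋯ σ_n σ_{n+1}` with `σ_0 = 0` and
`σ_{n+1} = -∞` (modeled by `-(n+1)`, which is smaller than every entry). -/
def word {n : ℕ} (σ : SignedPerm n) (i : ℕ) : ℤ :=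
  if i ≤ n then σ.toFun i else -(n + 1 : ℤ)

/-- The number of type-B descents: `|{i ∈ [0,n-1] : σ_i > σ_{i+1}}|`, `σ_0 = 0`. -/
def desB {n : ℕ} (σ : SignedPerm n) : ℕ :=
  ((Finset.range n).filter (fun i => word σ (i + 1) < word σ i)).card

/-- `a` is the starting position of a slide of `σ`, i.e. of a maximal
decreasing run of length at least 2 in the extended word. -/
def IsSlideStart {n : ℕ} (σ : SignedPerm n) (a : ℕ) : Prop :=
  a ≤ n ∧ (a = 0 ∨ word σ (a - 1) < word σ a) ∧ word σ (a + 1) < word σ a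

/-- The number of slides of `σ` (maximal decreasing runs of length ≥ 2 in the
extended word), counted via their starting positions. -/
def slides {n : ℕ} (σ : SignedPerm n) : ℕ :=
  ((Finset.range (n + 1)).filter (fun a =>
      (a = 0 ∨ word σ (a - 1) < word σ a) ∧ word σ (a + 1) < word σ a)).card

/-- `B^+(n,j,r)`: the number of `σ ∈ B_n` with `σ_n > 0`, `σ_1 = j` and
exactly `r` type-B descents (`j`, `r` integers; the count is `0` for `r < 0`). -/
noncomputable def BP (n : ℕ) (j r : ℤ) : ℕ :=
  Nat.card {σ : SignedPerm n // 0 < σ.toFun n ∧ σ.toFun 1 = j ∧ (desB σ : ℤ) = r}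

/-- `B^{++}(n,k)`: number of `σ ∈ B_n` with `σ_1 > 0`, `σ_n > 0`, `k` descents. -/
noncomputable def BPP (n k : ℕ) : ℕ :=
  Nat.card {σ : SignedPerm n // 0 < σ.toFun 1 ∧ 0 < σ.toFun n ∧ desB σ = k}

/-- `B^{-+}(n,k)`: number of `σ ∈ B_n` with `σ_1 < 0`, `σ_n > 0`, `k` descents. -/
noncomputable def BMP (n k : ℕ) : ℕ :=
  Nat.card {σ : SignedPerm n // σ.toFun 1 < 0 ∧ 0 < σ.toFun n ∧ desB σ = k}

/-- `b^{++}(n,k,s)`: number of `σ ∈ B_n` with `σ_1 > 0`, `σ_n > 0`,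
`k` descents and `s+1` slides. -/
noncomputable def bPP (n k s : ℕ) : ℕ :=
  Nat.card {σ : SignedPerm n //
    0 < σ.toFun 1 ∧ 0 < σ.toFun n ∧ desB σ = k ∧ slides σ = s + 1}

/-- `b^{-+}(n,k,s)`: number of `σ ∈ B_n` with `σ_1 < 0`, `σ_n > 0`,
`k` descents and `s+1` slides. -/
noncomputable def bMP (n k s : ℕ) : ℕ :=
  Nat.card {σ : SignedPerm n //
    σ.toFun 1 < 0 ∧ 0 < σ.toFun n ∧ desB σ = k ∧ slides σ = s + 1}

/-- Number of `σ ∈ B_n` with `σ_n > 0` and `k` descents. -/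
noncomputable def BplusCount (n k : ℕ) : ℕ :=
  Nat.card {σ : SignedPerm n // 0 < σ.toFun n ∧ desB σ = k}

/-- Number of `σ ∈ B_n` with `k` descents. -/
noncomputable def Ball (n k : ℕ) : ℕ := Nat.card {σ : SignedPerm n // desB σ = k}

/-- The `j`-Eulerian polynomial of type `B^+`: `B^+_{n,j}(t) = Σ_r B^+(n,j,r) t^r`. -/
noncomputable def BPpoly (n : ℕ) (j : ℤ) : Polynomial ℤ :=
  ∑ r ∈ Finset.range (n + 1), Polynomial.C (BP n j (r : ℤ) : ℤ) * Polynomial.X ^ r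

/-- The type-B Eulerian polynomial `B_n(t) = Σ_{σ ∈ B_n} t^{des_B σ}`. -/
noncomputable def Bfullpoly (n : ℕ) : Polynomial ℤ :=
  ∑ k ∈ Finset.range (n + 1), Polynomial.C (Ball n k : ℤ) * Polynomial.X ^ k

/-- The symmetrized `j`-Eulerian polynomial `𝔹^+_{n,j}(t)`. -/
noncomputable def BsymPoly (n j : ℕ) : Polynomial ℤ :=
  if 2 * j = n + 1 then BPpoly n (j : ℤ)
  else BPpoly n (j : ℤ) + BPpoly n ((n : ℤ) + 1 - j)


namespace BPaux

def red (s v : ℤ) : ℤ := if s < v then v - 1 else if v < -s then v + 1 else v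
def unred (s v : ℤ) : ℤ := if s ≤ v then v + 1 else if v ≤ -s then v - 1 else v

lemma unred_red {s v : ℤ} (hs : 1 ≤ s) (h1 : v ≠ s) (h2 : v ≠ -s) : unred s (red s v) = v := by
  unfold red unred; split_ifs <;> omega

lemma red_unred (s v : ℤ) : red s (unred s v) = v := by
  unfold red unred; split_ifs <;> omega

lemma unred_lt_unred {s a b : ℤ} : unred s a < unred s b ↔ a < b := by
  unfold unred; split_ifs <;> omega

lemma unred_pos {s v : ℤ} (hs : 1 ≤ s) : 0 < unred s v ↔ 0 < v := by
  unfold unred; split_ifs <;> omega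

lemma unred_lt_s {s v : ℤ} : unred s v < s ↔ v < s := by
  unfold unred; split_ifs <;> omega

lemma natAbs_unred_ne {s v : ℤ} (hs : 1 ≤ s) : (unred s v).natAbs ≠ s.natAbs := by
  unfold unred; split_ifs <;> omega

lemma natAbs_unred_inj {s a b : ℤ} (hs : 1 ≤ s) (h : (unred s a).natAbs = (unred s b).natAbs) :
    a.natAbs = b.natAbs := by
  unfold unred at h; split_ifs at h <;> omega

lemma SignedPerm.ext' {n : ℕ} {σ τ : SignedPerm n} (h : σ.toFun = τ.toFun) : σ = τ := by
  cases σ; cases τ; simpa using h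

lemma word_eq {n : ℕ} (σ : SignedPerm n) {i : ℕ} (h : i ≤ n) : word σ i = σ.toFun i := by
  simp [word, h]

lemma word_zero {n : ℕ} (σ : SignedPerm n) : word σ 0 = 0 := by
  rw [word_eq σ (Nat.zero_le n)]
  exact σ.eq_zero 0 (by simp)

instance signedPermFinite (n : ℕ) : Finite (SignedPerm n) := by
  have : ∀ (σ : SignedPerm n) (i : ↥(Finset.Icc 1 n)),
      σ.toFun i ∈ Finset.Icc (-(n:ℤ)) (n:ℤ) := by
    intro σ i
    have := σ.mem_abs i i.2
    simp only [Finset.mem_Icc] at this ⊢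
    omega
  apply Finite.of_injective
    (fun σ : SignedPerm n => fun i : ↥(Finset.Icc 1 n) =>
      (⟨σ.toFun i, this σ i⟩ : ↥(Finset.Icc (-(n:ℤ)) (n:ℤ))))
  intro σ τ h
  apply SignedPerm.ext'
  funext i
  by_cases hi : i ∈ Finset.Icc 1 n
  · have := congrFun h ⟨i, hi⟩
    simpa using this
  · rw [σ.eq_zero i hi, τ.eq_zero i hi]

end BPaux
namespace BPaux

def ins (s : ℤ) {m : ℕ} (hs1 : 1 ≤ s) (hsm : s ≤ m + 1) (τ : SignedPerm m) :
    SignedPerm (m + 1) where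
  toFun i := if i = 1 then s else if 2 ≤ i ∧ i ≤ m + 1 then unred s (τ.toFun (i - 1)) else 0
  mem_abs := by
    intro i hi
    simp only [Finset.mem_Icc] at hi ⊢
    split_ifs with h1 h2
    · omega
    · have := τ.mem_abs (i - 1) (by simp only [Finset.mem_Icc]; omega)
      simp only [Finset.mem_Icc] at this
      unfold unred; split_ifs <;> omega
    · omega
  inj_abs := by
    intro i hi j hj h
    simp only [Finset.mem_Icc] at hi hj
    split_ifs at h with h1 h2 h3 h4 h5
    · omega
    · exact absurd h.symm (natAbs_unred_ne hs1)
    · omega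
    · exact absurd h (natAbs_unred_ne hs1)
    · have := τ.inj_abs (i - 1) (by simp only [Finset.mem_Icc]; omega)
        (j - 1) (by simp only [Finset.mem_Icc]; omega) (natAbs_unred_inj hs1 h)
      omega
    · omega
    · omega
    · omega
    · omega
  eq_zero := by
    intro i hi
    simp only [Finset.mem_Icc, not_and, not_le] at hi
    split_ifs <;> omega

def del (s : ℤ) {m : ℕ} (hs1 : 1 ≤ s) (hsm : s ≤ m + 1) (σ : SignedPerm (m + 1))
    (h1 : σ.toFun 1 = s) : SignedPerm m where
  toFun i := if 1 ≤ i ∧ i ≤ m then red s (σ.toFun (i + 1)) else 0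
  mem_abs := by
    intro i hi
    simp only [Finset.mem_Icc] at hi ⊢
    split_ifs with h
    · have hv := σ.mem_abs (i + 1) (by simp only [Finset.mem_Icc]; omega)
      have hne : (σ.toFun (i+1)).natAbs ≠ s.natAbs := by
        intro hc
        have := σ.inj_abs (i + 1) (by simp only [Finset.mem_Icc]; omega)
          1 (by simp only [Finset.mem_Icc]; omega) (by rw [hc, h1])
        omega
      simp only [Finset.mem_Icc] at hv
      unfold red; split_ifs <;> omega
    · omega
  inj_abs := by
    intro i hi j hj h
    simp only [Finset.mem_Icc] at hi hj
    rw [if_pos (by omega : 1 ≤ i ∧ i ≤ m), if_pos (by omega : 1 ≤ j ∧ j ≤ m)] at h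
    have habs : ∀ k, 1 ≤ k → k ≤ m → (σ.toFun (k+1)).natAbs ≠ s.natAbs ∧
        1 ≤ (σ.toFun (k+1)).natAbs ∧ (σ.toFun (k+1)).natAbs ≤ m + 1 := by
      intro k hk1 hk2
      have hv := σ.mem_abs (k + 1) (by simp only [Finset.mem_Icc]; omega)
      simp only [Finset.mem_Icc] at hv
      refine ⟨?_, hv.1, hv.2⟩
      intro hc
      have := σ.inj_abs (k + 1) (by simp only [Finset.mem_Icc]; omega)
        1 (by simp only [Finset.mem_Icc]; omega) (by rw [hc, h1])
      omega
    have hi' := habs i hi.1 hi.2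
    have hj' := habs j hj.1 hj.2
    have : (σ.toFun (i+1)).natAbs = (σ.toFun (j+1)).natAbs := by
      revert h; unfold red; split_ifs <;> omega
    have := σ.inj_abs (i + 1) (by simp only [Finset.mem_Icc]; omega)
      (j + 1) (by simp only [Finset.mem_Icc]; omega) this
    omega
  eq_zero := by
    intro i hi
    simp only [Finset.mem_Icc, not_and, not_le] at hi
    split_ifs <;> omega

lemma ins_toFun_one {s : ℤ} {m : ℕ} (hs1 : 1 ≤ s) (hsm : s ≤ m + 1) (τ : SignedPerm m) :
    (ins s hs1 hsm τ).toFun 1 = s := rfl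

lemma ins_toFun {s : ℤ} {m : ℕ} (hs1 : 1 ≤ s) (hsm : s ≤ m + 1) (τ : SignedPerm m)
    {i : ℕ} (h2 : 2 ≤ i) (hi : i ≤ m + 1) :
    (ins s hs1 hsm τ).toFun i = unred s (τ.toFun (i - 1)) := by
  show (if i = 1 then s else if 2 ≤ i ∧ i ≤ m + 1 then unred s (τ.toFun (i - 1)) else 0) = _
  rw [if_neg (by omega), if_pos ⟨h2, hi⟩]

lemma del_ins {s : ℤ} {m : ℕ} (hs1 : 1 ≤ s) (hsm : s ≤ m + 1) (τ : SignedPerm m) :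
    del s hs1 hsm (ins s hs1 hsm τ) (ins_toFun_one hs1 hsm τ) = τ := by
  apply SignedPerm.ext'
  funext i
  show (if 1 ≤ i ∧ i ≤ m then red s ((ins s hs1 hsm τ).toFun (i + 1)) else 0) = τ.toFun i
  split_ifs with h
  · rw [ins_toFun hs1 hsm τ (by omega) (by omega)]
    simp only [Nat.add_sub_cancel]
    exact red_unred s _
  · exact (τ.eq_zero i (by simp only [Finset.mem_Icc]; omega)).symm

lemma ins_del {s : ℤ} {m : ℕ} (hs1 : 1 ≤ s) (hsm : s ≤ m + 1) (σ : SignedPerm (m + 1))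
    (h1 : σ.toFun 1 = s) :
    ins s hs1 hsm (del s hs1 hsm σ h1) = σ := by
  apply SignedPerm.ext'
  funext i
  show (if i = 1 then s else if 2 ≤ i ∧ i ≤ m + 1 then
      unred s ((del s hs1 hsm σ h1).toFun (i - 1)) else 0) = σ.toFun i
  split_ifs with hA hB
  · rw [hA, h1]
  · show unred s (if 1 ≤ i - 1 ∧ i - 1 ≤ m then red s (σ.toFun (i - 1 + 1)) else 0) = _
    rw [if_pos (by omega)]
    have hii : i - 1 + 1 = i := by omega
    rw [hii]
    have hne : (σ.toFun i).natAbs ≠ s.natAbs := by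
      intro hc
      have := σ.inj_abs i (by simp only [Finset.mem_Icc]; omega)
        1 (by simp only [Finset.mem_Icc]; omega) (by rw [hc, h1])
      omega
    exact unred_red hs1 (by omega) (by omega)
  · exact (σ.eq_zero i (by simp only [Finset.mem_Icc]; omega)).symm

end BPaux
namespace BPaux

lemma ins_pos_iff {s : ℤ} {m : ℕ} (hs1 : 1 ≤ s) (hsm : s ≤ m + 1) (hm : 1 ≤ m)
    (τ : SignedPerm m) :
    0 < (ins s hs1 hsm τ).toFun (m + 1) ↔ 0 < τ.toFun m := by
  rw [ins_toFun hs1 hsm τ (by omega) le_rfl]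
  simp only [Nat.add_sub_cancel]
  exact unred_pos hs1

lemma desB_ins {s : ℤ} {m : ℕ} (hs1 : 1 ≤ s) (hsm : s ≤ m + 1) (hm : 1 ≤ m)
    (τ : SignedPerm m) :
    desB (ins s hs1 hsm τ) =
      desB τ + (if 0 < τ.toFun 1 ∧ τ.toFun 1 < s then 1 else 0) := by
  classical
  set σ := ins s hs1 hsm τ with hσ
  obtain ⟨m', rfl⟩ : ∃ m', m = m' + 1 := ⟨m - 1, by omega⟩
  rw [desB, desB, Finset.card_filter, Finset.card_filter]
  rw [Finset.sum_range_succ', Finset.sum_range_succ', Finset.sum_range_succ']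
  have h0 : (if word σ (0 + 1) < word σ 0 then 1 else 0) = 0 := by
    rw [word_zero, word_eq σ (by omega), if_neg]
    rw [hσ, ins_toFun_one]
    omega
  have hτ0 : (if word τ (0 + 1) < word τ 0 then 1 else 0) =
      (if τ.toFun 1 < 0 then 1 else 0) := by
    rw [word_zero, word_eq τ (by omega)]
  have h1 : (if word σ (0 + 1 + 1) < word σ (0 + 1) then 1 else 0) =
      (if τ.toFun 1 < 0 then 1 else 0) +
      (if 0 < τ.toFun 1 ∧ τ.toFun 1 < s then 1 else 0) := by
    rw [word_eq σ (by omega), word_eq σ (by omega)]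
    show (if σ.toFun 2 < σ.toFun 1 then 1 else 0) = _
    rw [hσ, ins_toFun_one, ins_toFun hs1 hsm τ (by omega) (by omega)]
    have hne : τ.toFun 1 ≠ 0 := by
      have := τ.mem_abs 1 (by simp only [Finset.mem_Icc]; omega)
      simp only [Finset.mem_Icc] at this
      omega
    have := @unred_lt_s s (τ.toFun 1)
    norm_num
    split_ifs <;> omega
  have hterm : ∀ i ∈ Finset.range m',
      (if word σ (i + 1 + 1 + 1) < word σ (i + 1 + 1) then 1 else 0) =
      (if word τ (i + 1 + 1) < word τ (i + 1) then 1 else 0) := by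
    intro i hi
    simp only [Finset.mem_range] at hi
    rw [word_eq σ (by omega), word_eq σ (by omega), word_eq τ (by omega),
      word_eq τ (by omega)]
    rw [hσ, ins_toFun hs1 hsm τ (by omega) (by omega),
      ins_toFun hs1 hsm τ (by omega) (by omega)]
    have h3 : i + 1 + 1 + 1 - 1 = i + 1 + 1 := by omega
    have h2 : i + 1 + 1 - 1 = i + 1 := by omega
    rw [h3, h2]
    by_cases h : τ.toFun (i + 1 + 1) < τ.toFun (i + 1)
    · rw [if_pos (unred_lt_unred.mpr h), if_pos h]
    · rw [if_neg (fun hc => h (unred_lt_unred.mp hc)), if_neg h]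
  rw [Finset.sum_congr rfl hterm, h0, h1, hτ0]
  ring
end BPaux
namespace BPaux

lemma toFun_one_ne_zero {m : ℕ} (hm : 1 ≤ m) (τ : SignedPerm m) : τ.toFun 1 ≠ 0 := by
  have := τ.mem_abs 1 (by simp only [Finset.mem_Icc]; omega)
  simp only [Finset.mem_Icc] at this
  omega

lemma BP_rec {m : ℕ} (hm : 1 ≤ m) (s : ℤ) (hs1 : 1 ≤ s) (hsm : s ≤ m + 1) (r : ℤ) :
    BP (m + 1) s r =
      (∑ j ∈ Finset.Icc (1 : ℤ) (s - 1), BP m j (r - 1)) +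
      (∑ j ∈ Finset.Icc (1 : ℤ) (m : ℤ), BP m (-j) r) +
      (∑ j ∈ Finset.Icc s (m : ℤ), BP m j r) := by
  classical
  haveI : Fintype (SignedPerm m) := Fintype.ofFinite _
  -- Step 1: the equivalence
  have hE : BP (m + 1) s r = Nat.card {τ : SignedPerm m // 0 < τ.toFun m ∧
      (desB τ : ℤ) + (if 0 < τ.toFun 1 ∧ τ.toFun 1 < s then 1 else 0) = r} := by
    apply Nat.card_congr
    refine ⟨fun σp => ⟨del s hs1 hsm σp.1 σp.2.2.1, ?_, ?_⟩,
            fun τp => ⟨ins s hs1 hsm τp.1, ?_, ?_, ?_⟩, ?_, ?_⟩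
    · rw [← ins_pos_iff hs1 hsm hm, ins_del hs1 hsm σp.1 σp.2.2.1]
      exact σp.2.1
    · have hd := desB_ins hs1 hsm hm (del s hs1 hsm σp.1 σp.2.2.1)
      rw [ins_del hs1 hsm σp.1 σp.2.2.1] at hd
      have := σp.2.2.2
      rw [hd] at this
      push_cast at this ⊢
      split_ifs at this ⊢ <;> omega
    · exact (ins_pos_iff hs1 hsm hm τp.1).mpr τp.2.1
    · exact ins_toFun_one hs1 hsm τp.1
    · rw [desB_ins hs1 hsm hm τp.1]
      have := τp.2.2
      push_cast at this ⊢
      split_ifs at this ⊢ <;> omega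
    · intro σp
      exact Subtype.ext (ins_del hs1 hsm σp.1 σp.2.2.1)
    · intro τp
      exact Subtype.ext (del_ins hs1 hsm τp.1)
  rw [hE]
  -- Step 2: fiberwise count over the first entry
  rw [Nat.card_eq_fintype_card, Fintype.card_subtype]
  rw [Finset.card_eq_sum_card_fiberwise
    (f := fun τ : SignedPerm m => τ.toFun 1) (t := Finset.Icc (-(m : ℤ)) (m : ℤ))
    (by
      intro τ _
      have := τ.mem_abs 1 (by simp only [Finset.mem_Icc]; omega)
      simp only [Finset.mem_Icc, Finset.mem_coe] at this ⊢
      omega)]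
  -- Step 3: identify each fiber with a BP value
  have key : ∀ j ∈ Finset.Icc (-(m : ℤ)) (m : ℤ), j ≠ 0 →
      ((Finset.univ.filter (fun τ : SignedPerm m => 0 < τ.toFun m ∧
        (desB τ : ℤ) + (if 0 < τ.toFun 1 ∧ τ.toFun 1 < s then 1 else 0) = r)).filter
        (fun τ => τ.toFun 1 = j)).card
      = BP m j (if 0 < j ∧ j < s then r - 1 else r) := by
    intro j _ hj0
    rw [BP, Nat.card_eq_fintype_card, Fintype.card_subtype, Finset.filter_filter]
    congr 1
    apply Finset.filter_congr
    intro τ _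
    constructor
    · rintro ⟨⟨hpos, hdes⟩, h1⟩
      refine ⟨hpos, h1, ?_⟩
      rw [h1] at hdes
      split_ifs at hdes ⊢ <;> omega
    · rintro ⟨hpos, h1, hdes⟩
      refine ⟨⟨hpos, ?_⟩, h1⟩
      rw [h1]
      split_ifs at hdes ⊢ <;> omega
  have key0 : ((Finset.univ.filter (fun τ : SignedPerm m => 0 < τ.toFun m ∧
        (desB τ : ℤ) + (if 0 < τ.toFun 1 ∧ τ.toFun 1 < s then 1 else 0) = r)).filter
        (fun τ => τ.toFun 1 = (0 : ℤ))).card = 0 := by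
    rw [Finset.card_eq_zero, Finset.filter_eq_empty_iff]
    intro τ _
    exact toFun_one_ne_zero hm τ
  -- Step 4: split the index interval
  have hsplit : Finset.Icc (-(m : ℤ)) (m : ℤ) =
      ((Finset.Icc (-(m : ℤ)) (-1) ∪ {0}) ∪ (Finset.Icc (1 : ℤ) (s - 1) ∪ Finset.Icc s (m : ℤ))) := by
    ext x
    simp only [Finset.mem_Icc, Finset.mem_union, Finset.mem_singleton]
    omega
  have d2 : Disjoint (Finset.Icc (1 : ℤ) (s - 1)) (Finset.Icc s (m : ℤ)) := by
    simp only [Finset.disjoint_left, Finset.mem_Icc]; intro a ha hb; omega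
  have d1 : Disjoint (Finset.Icc (-(m : ℤ)) (-1)) ({0} : Finset ℤ) := by
    simp only [Finset.disjoint_left, Finset.mem_Icc, Finset.mem_singleton]; intro a ha hb; omega
  have d3 : Disjoint (Finset.Icc (-(m : ℤ)) (-1) ∪ {0})
      (Finset.Icc (1 : ℤ) (s - 1) ∪ Finset.Icc s (m : ℤ)) := by
    simp only [Finset.disjoint_left, Finset.mem_union, Finset.mem_Icc, Finset.mem_singleton]
    intro a ha hb; omega
  rw [hsplit, Finset.sum_union d3, Finset.sum_union d1, Finset.sum_union d2,
    Finset.sum_singleton, key0]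
  have e1 : ∀ j ∈ Finset.Icc (-(m : ℤ)) (-1),
      ((Finset.univ.filter (fun τ : SignedPerm m => 0 < τ.toFun m ∧
        (desB τ : ℤ) + (if 0 < τ.toFun 1 ∧ τ.toFun 1 < s then 1 else 0) = r)).filter (fun τ : SignedPerm m => τ.toFun 1 = j)).card
        = BP m j r := by
    intro j hj
    simp only [Finset.mem_Icc] at hj
    rw [key j (by simp only [Finset.mem_Icc]; omega) (by omega), if_neg (by omega)]
  have e2 : ∀ j ∈ Finset.Icc (1 : ℤ) (s - 1),
      ((Finset.univ.filter (fun τ : SignedPerm m => 0 < τ.toFun m ∧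
        (desB τ : ℤ) + (if 0 < τ.toFun 1 ∧ τ.toFun 1 < s then 1 else 0) = r)).filter (fun τ : SignedPerm m => τ.toFun 1 = j)).card
        = BP m j (r - 1) := by
    intro j hj
    simp only [Finset.mem_Icc] at hj
    rw [key j (by simp only [Finset.mem_Icc]; omega) (by omega), if_pos (by omega)]
  have e3 : ∀ j ∈ Finset.Icc s (m : ℤ),
      ((Finset.univ.filter (fun τ : SignedPerm m => 0 < τ.toFun m ∧
        (desB τ : ℤ) + (if 0 < τ.toFun 1 ∧ τ.toFun 1 < s then 1 else 0) = r)).filter (fun τ : SignedPerm m => τ.toFun 1 = j)).card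
        = BP m j r := by
    intro j hj
    simp only [Finset.mem_Icc] at hj
    rw [key j (by simp only [Finset.mem_Icc]; omega) (by omega), if_neg (by omega)]
  rw [Finset.sum_congr rfl e1, Finset.sum_congr rfl e2, Finset.sum_congr rfl e3]
  have eneg : ∑ j ∈ Finset.Icc (-(m : ℤ)) (-1), BP m j r
      = ∑ j ∈ Finset.Icc (1 : ℤ) (m : ℤ), BP m (-j) r := by
    apply Finset.sum_nbij' (i := fun j => -j) (j := fun j => -j) <;>
      simp only [Finset.mem_Icc, neg_neg, implies_true] <;> intros <;> omega
  rw [eneg]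
  ring

end BPaux
namespace BPaux

def sp1 : SignedPerm 1 where
  toFun i := if i = 1 then 1 else 0
  mem_abs := by intro i hi; simp only [Finset.mem_Icc] at hi; rw [if_pos (by omega : i = 1)]; simp
  inj_abs := by
    intro i hi j hj _
    simp only [Finset.mem_Icc] at hi hj
    omega
  eq_zero := by
    intro i hi
    simp only [Finset.mem_Icc] at hi
    rw [if_neg (by omega : ¬ i = 1)]

lemma BP_one : BP 1 1 0 = 1 := by
  rw [BP, Nat.card_eq_one_iff_unique]
  constructor
  · constructor
    rintro ⟨σ, hσ⟩ ⟨τ, hτ⟩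
    apply Subtype.ext
    apply SignedPerm.ext'
    funext i
    by_cases hi : i = 1
    · rw [hi, hσ.2.1, hτ.2.1]
    · rw [σ.eq_zero i (by simp only [Finset.mem_Icc]; omega),
        τ.eq_zero i (by simp only [Finset.mem_Icc]; omega)]
  · refine ⟨⟨sp1, ?_, rfl, ?_⟩⟩
    · norm_num [sp1]
    · have : desB sp1 = 0 := by
        rw [desB]
        rw [Finset.card_eq_zero, Finset.filter_eq_empty_iff]
        intro i hi
        simp only [Finset.mem_range] at hi
        interval_cases i
        rw [word_zero, word_eq sp1 le_rfl]
        norm_num [sp1]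
      rw [this]
      rfl

lemma BP_neg_one (r' : ℤ) : BP 1 (-1) r' = 0 := by
  rw [BP, Nat.card_eq_zero]
  left
  constructor
  rintro ⟨σ, hpos, h1, _⟩
  rw [h1] at hpos
  omega

end BPaux

/-- Recurrence for `B^+(n,s,r)`, together with the initial conditions
`B^+(1,1,0) = 1` and `B^+(1,-1,r) = 0`. -/
theorem stmt2 (n s r : ℕ) (hn : 2 ≤ n) (hs1 : 1 ≤ s) (hsn : s ≤ n) (hr : r ≤ n - 1) :
    (BP n (s : ℤ) (r : ℤ) =
      (∑ j ∈ Finset.Icc 1 (s - 1), BP (n - 1) (j : ℤ) ((r : ℤ) - 1)) +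
      (∑ j ∈ Finset.Icc 1 (n - 1), BP (n - 1) (-(j : ℤ)) (r : ℤ)) +
      (∑ j ∈ Finset.Icc s (n - 1), BP (n - 1) (j : ℤ) (r : ℤ))) ∧
    BP 1 1 0 = 1 ∧ (∀ r' : ℤ, BP 1 (-1) r' = 0) := by
  refine ⟨?_, BPaux.BP_one, BPaux.BP_neg_one⟩
  obtain ⟨m, rfl⟩ : ∃ m, n = m + 1 := ⟨n - 1, by omega⟩
  have hm : 1 ≤ m := by omega
  simp only [Nat.add_sub_cancel]
  rw [BPaux.BP_rec hm (s : ℤ) (by exact_mod_cast hs1) (by exact_mod_cast hsn) (r : ℤ)]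
  have S1 : ∑ j ∈ Finset.Icc (1 : ℤ) ((s : ℤ) - 1), BP m j ((r : ℤ) - 1)
      = ∑ j ∈ Finset.Icc 1 (s - 1), BP m (j : ℤ) ((r : ℤ) - 1) := by
    refine Finset.sum_nbij' (fun j : ℤ => j.toNat) (fun j : ℕ => (j : ℤ)) ?_ ?_ ?_ ?_ ?_ <;>
      intro x hx <;> simp only [Finset.mem_Icc] at hx ⊢
    · omega
    · omega
    · omega
    · omega
    · have h : ((x.toNat : ℕ) : ℤ) = x := by omega
      rw [h]
  have S2 : ∑ j ∈ Finset.Icc (1 : ℤ) (m : ℤ), BP m (-j) (r : ℤ)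
      = ∑ j ∈ Finset.Icc 1 m, BP m (-(j : ℤ)) (r : ℤ) := by
    refine Finset.sum_nbij' (fun j : ℤ => j.toNat) (fun j : ℕ => (j : ℤ)) ?_ ?_ ?_ ?_ ?_ <;>
      intro x hx <;> simp only [Finset.mem_Icc] at hx ⊢
    · omega
    · omega
    · omega
    · omega
    · have h : ((x.toNat : ℕ) : ℤ) = x := by omega
      rw [h]
  have S3 : ∑ j ∈ Finset.Icc ((s : ℕ) : ℤ) (m : ℤ), BP m j (r : ℤ)
      = ∑ j ∈ Finset.Icc s m, BP m (j : ℤ) (r : ℤ) := by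
    refine Finset.sum_nbij' (fun j : ℤ => j.toNat) (fun j : ℕ => (j : ℤ)) ?_ ?_ ?_ ?_ ?_ <;>
      intro x hx <;> simp only [Finset.mem_Icc] at hx ⊢
    · omega
    · omega
    · omega
    · omega
    · have h : ((x.toNat : ℕ) : ℤ) = x := by omega
      rw [h]
  rw [S1, S2, S3]
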